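/- Let X, Y, A, G, N be as follows: X and Y are disjoint finite sets, A is an X×Y matrix over GF(2), G is the simple bipartite graph on X ∪ Y with x ∈ X adjacent to y ∈ Y iff A_{xy} = 1, and N is the binary matroid on X ∪ Y represented by assigning to x ∈ X the standard basis column e_x ∈ GF(2)^X and to y ∈ Y the column A_{·y}. If the matroid N is representable over every field, then for every field F, the isotropic 2-matroid Z₂(G) is strictly representable over F. -/

import Mathlib

open Matrix

set_option synthInstance.maxHeartbeats 1000000
set_option maxHeartbeats 2000000
set_option linter.unusedVariables false

noncomputable section

/-- The rank over `F` of the set of columns of `M` indexed by `S`. -/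
def colSpanRank (F : Type*) [Field F] {m n : Type*} (M : Matrix m n F) (S : Set n) : ℕ :=
  Module.finrank F ↥(Submodule.span F ((fun j i => M i j) '' S))

/-- A subtransversal of `W₂(G) = V × {φ,χ}`: at most one element of each pair. -/
def Subtransversal2 {V : Type*} (S : Set (V × Fin 2)) : Prop :=
  ∀ v i j, (v, i) ∈ S → (v, j) ∈ S → i = j

/-- The matrix `IA(G) = (I | A)` over GF(2); the columns `(v,0)` and `(v,1)` are
`φ_G(v)` and `χ_G(v)` respectively. -/
def IAmat {V : Type*} [DecidableEq V] (A : Matrix V V (ZMod 2)) :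
    Matrix V (V × Fin 2) (ZMod 2) :=
  Matrix.of fun v p => if p.2 = 0 then (if v = p.1 then 1 else 0) else A v p.1

/-- `Z₂(G)` is strictly representable over `F`: the sheltering matroid has rank `|V(G)|`. -/
def Z2RepStrict (F : Type*) [Field F] {V : Type*} [Fintype V] [DecidableEq V]
    (A : Matrix V V (ZMod 2)) : Prop :=
  ∃ (k : ℕ) (P : Matrix (Fin k) (V × Fin 2) F),
    P.rank = Fintype.card V ∧
    ∀ S : Set (V × Fin 2), Subtransversal2 S →
      colSpanRank F P S = colSpanRank (ZMod 2) (IAmat A) S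

/-- The adjacency matrix of the bipartite graph on `X ⊕ Y` determined by the
GF(2)-matrix `A`. -/
def bipAdj {X Y : Type*} (A : Matrix X Y (ZMod 2)) :
    Matrix (X ⊕ Y) (X ⊕ Y) (ZMod 2) :=
  Matrix.of fun a b =>
    match a, b with
    | Sum.inl x, Sum.inr y => A x y
    | Sum.inr y, Sum.inl x => A x y
    | _, _ => 0

/-- The representation `(I | A)` of the binary matroid `N` on `X ⊕ Y`. -/
def Nmat {X Y : Type*} [DecidableEq X] (A : Matrix X Y (ZMod 2)) :
    Matrix X (X ⊕ Y) (ZMod 2) :=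
  Matrix.of fun i c =>
    match c with
    | Sum.inl x => if i = x then 1 else 0
    | Sum.inr y => A i y


/-- generic `(I | M)` -/
def genN {X Y R : Type*} [DecidableEq X] (M : Matrix X Y R) [Zero R] [One R] :
    Matrix X (X ⊕ Y) R :=
  Matrix.of fun i c =>
    match c with
    | Sum.inl x => if i = x then 1 else 0
    | Sum.inr y => M i y

/-- instance-free rank of the submatrix of `M` with rows in `p` and columns in `q`. -/
def subRank (K : Type*) [Field K] {X Y : Type*} (M : Matrix X Y K)
    (p : X → Prop) (q : Y → Prop) : ℕ :=
  Module.finrank K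
    ↥(Submodule.span K (Set.range fun (j : Subtype q) (i : Subtype p) => M i.val j.val))

section helpers

open Submodule Module

lemma finrank_span_image_comp {K V V' ι ι' : Type*} [Field K] [AddCommGroup V] [Module K V]
    [AddCommGroup V'] [Module K V'] (c : ι → V) (c' : ι' → V') (σ : ι → ι')
    (L : V →ₗ[K] V') (hL : Function.Injective L) (h : ∀ i, c' (σ i) = L (c i)) (S : Set ι) :
    Module.finrank K (span K (c' '' (σ '' S))) = Module.finrank K (span K (c '' S)) := by
  have himg : c' '' (σ '' S) = L '' (c '' S) := by
    rw [Set.image_image, ← Set.image_comp]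
    exact Set.image_congr fun i _ => h i
  rw [himg, ← Submodule.map_span]
  exact (LinearEquiv.finrank_eq (Submodule.equivMapOfInjective L hL _)).symm

lemma colSpanRank_eq_of_comp {K m m' n : Type*} [Field K] (M : Matrix m n K) (M' : Matrix m' n K)
    (L : (m → K) →ₗ[K] (m' → K)) (hL : Function.Injective L)
    (h : ∀ j, (fun i => M' i j) = L (fun i => M i j)) (S : Set n) :
    colSpanRank K M' S = colSpanRank K M S := by
  have := finrank_span_image_comp (fun j i => M i j) (fun j i => M' i j) id L hL h S
  rw [Set.image_id] at this
  exact this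

lemma subRank_congr {K X Y : Type*} [Field K] (M : Matrix X Y K)
    {p p' : X → Prop} {q q' : Y → Prop}
    (h1 : ∀ x, p x ↔ p' x) (h2 : ∀ y, q y ↔ q' y) :
    subRank K M p q = subRank K M p' q' := by
  let e1 : Subtype p' ≃ Subtype p := Equiv.subtypeEquivRight fun x => (h1 x).symm
  let e2 : Subtype q ≃ Subtype q' := Equiv.subtypeEquivRight h2
  have key := finrank_span_image_comp
    (fun (j : Subtype q) (i : Subtype p) => M i.val j.val)
    (fun (j : Subtype q') (i : Subtype p') => M i.val j.val) e2
    (LinearEquiv.funCongrLeft K K e1).toLinearMap (LinearEquiv.funCongrLeft K K e1).injective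
    (fun j => by funext i; simp [LinearEquiv.funCongrLeft_apply, LinearMap.funLeft_apply, e1, e2, Equiv.subtypeEquivRight]; rfl) Set.univ
  rw [Set.image_univ (f := ⇑e2), Equiv.range_eq_univ, Set.image_univ, Set.image_univ] at key
  exact key.symm

lemma subRank_eq_rank {K X Y : Type*} [Field K] (M : Matrix X Y K)
    (p : X → Prop) (q : Y → Prop) [Fintype (Subtype q)] :
    subRank K M p q = ((M.submatrix (Subtype.val : Subtype p → X)
      (Subtype.val : Subtype q → Y))).rank := by
  rw [Matrix.rank_eq_finrank_span_cols]
  rfl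

lemma subRank_transpose {K X Y : Type*} [Field K] [Fintype X] [Fintype Y] (M : Matrix X Y K)
    (p : X → Prop) (q : Y → Prop) :
    subRank K M p q = subRank K Mᵀ q p := by
  classical
  rw [subRank_eq_rank, subRank_eq_rank]
  rw [← Matrix.transpose_submatrix, Matrix.rank_transpose]

lemma subRank_eq_zero_rows {K X Y : Type*} [Field K] (M : Matrix X Y K)
    (p : X → Prop) (q : Y → Prop) (h : ∀ x, ¬ p x) :
    subRank K M p q = 0 := by
  haveI : IsEmpty (Subtype p) := ⟨fun x => h x.val x.2⟩
  haveI : Subsingleton (Subtype p → K) := ⟨fun a b => funext fun i => isEmptyElim i⟩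
  exact Module.finrank_zero_of_subsingleton

lemma subRank_eq_zero_cols {K X Y : Type*} [Field K] (M : Matrix X Y K)
    (p : X → Prop) (q : Y → Prop) (h : ∀ y, ¬ q y) :
    subRank K M p q = 0 := by
  haveI : IsEmpty (Subtype q) := ⟨fun y => h y.val y.2⟩
  unfold subRank
  rw [Set.range_eq_empty, Submodule.span_empty, finrank_bot]

lemma rank_eq_csr_univ {m n K : Type*} [Fintype n] [Field K] (M : Matrix m n K) :
    M.rank = colSpanRank K M Set.univ := by
  rw [Matrix.rank_eq_finrank_span_cols, colSpanRank, Set.image_univ]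
  rfl

end helpers

section csrgenN

open Submodule Module

lemma csr_genN {X Y K : Type*} [Fintype X] [DecidableEq X] [Fintype Y] [Field K]
    (M : Matrix X Y K) (S : Set (X ⊕ Y)) :
    colSpanRank K (genN M) S =
      Nat.card {x : X // Sum.inl x ∈ S} +
        subRank K M (fun x => Sum.inl x ∉ S) (fun y => Sum.inr y ∈ S) := by
  classical
  set cols : (X ⊕ Y) → (X → K) := fun c i => genN M i c with hcols
  set π : (X → K) →ₗ[K] ({x : X // Sum.inl x ∉ S} → K) :=
    LinearMap.funLeft K K Subtype.val with hπ
  set W := Submodule.span K (cols '' S) with hW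
  have hker_le : LinearMap.ker π ≤ W := by
    intro f hf
    have hf' : ∀ x : X, Sum.inl x ∉ S → f x = 0 := by
      intro x hx
      exact congrFun (LinearMap.mem_ker.mp hf) ⟨x, hx⟩
    rw [pi_eq_sum_univ f]
    refine Submodule.sum_mem _ fun x _ => ?_
    by_cases hx : Sum.inl x ∈ S
    · refine Submodule.smul_mem _ _ (Submodule.subset_span ?_)
      refine ⟨Sum.inl x, hx, ?_⟩
      funext j
      simp [hcols, genN, eq_comm]
    · rw [hf' x hx, zero_smul]
      exact Submodule.zero_mem _
  have hsurj : Function.Surjective π :=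
    LinearMap.funLeft_surjective_of_injective K K _ Subtype.val_injective
  have h1 : finrank K (LinearMap.range π) + finrank K (LinearMap.ker π) = Fintype.card X := by
    rw [LinearMap.finrank_range_add_finrank_ker]
    simp [Module.finrank_pi]
  have h2 : finrank K (LinearMap.range π) = Fintype.card {x : X // Sum.inl x ∉ S} := by
    rw [LinearMap.range_eq_top.mpr hsurj]
    simp [Module.finrank_pi]
  have hcard : Fintype.card {x : X // Sum.inl x ∈ S} + Fintype.card {x : X // Sum.inl x ∉ S}
      = Fintype.card X := by
    rw [← Fintype.card_sum]
    exact Fintype.card_congr (Equiv.sumCompl (fun x => Sum.inl x ∈ S))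
  have hkerrank : finrank K (LinearMap.ker π) = Fintype.card {x : X // Sum.inl x ∈ S} := by
    omega
  have h3 : finrank K W = finrank K (LinearMap.ker π) + finrank K (Submodule.map π W) := by
    have h4 := LinearMap.finrank_range_add_finrank_ker (π.domRestrict W)
    rw [LinearMap.range_domRestrict] at h4
    have hk : LinearMap.ker (π.domRestrict W) = (LinearMap.ker π).comap W.subtype := by
      ext x
      simp [LinearMap.mem_ker, LinearMap.domRestrict_apply]
    rw [hk] at h4
    have h5 : finrank K ↥((LinearMap.ker π).comap W.subtype) = finrank K ↥(LinearMap.ker π) :=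
      LinearEquiv.finrank_eq (Submodule.comapSubtypeEquivOfLe hker_le)
    omega
  have h4 : Submodule.map π W = Submodule.span K
      (Set.range fun (p : {y : Y // Sum.inr y ∈ S}) (d : {x : X // Sum.inl x ∉ S}) =>
        M d.val p.val) := by
    rw [hW, Submodule.map_span, ← Set.image_comp]
    apply le_antisymm
    · rw [Submodule.span_le]
      rintro _ ⟨c, hc, rfl⟩
      rcases c with x | y
      · have : (π ∘ cols) (Sum.inl x) = 0 := by
          funext d
          have hne : d.val ≠ x := fun h => d.2 (h ▸ hc)
          simp [hcols, hπ, genN, LinearMap.funLeft_apply, hne]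
        rw [this]
        exact Submodule.zero_mem _
      · exact Submodule.subset_span ⟨⟨y, hc⟩, rfl⟩
    · rw [Submodule.span_le]
      rintro _ ⟨p, rfl⟩
      exact Submodule.subset_span ⟨Sum.inr p.val, p.2, rfl⟩
  have h5 : subRank K M (fun x => Sum.inl x ∉ S) (fun y => Sum.inr y ∈ S)
      = finrank K (Submodule.map π W) := by
    rw [h4]
    rfl
  have hfinal : colSpanRank K (genN M) S = finrank K W := rfl
  rw [hfinal, h3, hkerrank, h5, Nat.card_eq_fintype_card]

lemma csr_genN_univ {X Y K : Type*} [Fintype X] [DecidableEq X] [Fintype Y] [Field K]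
    (M : Matrix X Y K) :
    colSpanRank K (genN M) Set.univ = Fintype.card X := by
  rw [csr_genN]
  have h1 : Nat.card {x : X // Sum.inl x ∈ (Set.univ : Set (X ⊕ Y))} = Fintype.card X := by
    rw [Nat.card_eq_fintype_card]
    exact Fintype.card_congr (Equiv.subtypeUnivEquiv fun x => Set.mem_univ _)
  have h2 : subRank K M (fun x => Sum.inl x ∉ (Set.univ : Set (X ⊕ Y)))
      (fun y => Sum.inr y ∈ (Set.univ : Set (X ⊕ Y))) = 0 :=
    subRank_eq_zero_rows _ _ _ fun x hx => hx trivial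
  omega

lemma csr_genN_inl {X Y K : Type*} [Fintype X] [DecidableEq X] [Fintype Y] [Field K]
    (M : Matrix X Y K) :
    colSpanRank K (genN M) (Set.range (Sum.inl : X → X ⊕ Y)) = Fintype.card X := by
  classical
  rw [csr_genN]
  have h1 : Nat.card {x : X // Sum.inl x ∈ Set.range (Sum.inl : X → X ⊕ Y)}
      = Fintype.card X := by
    rw [Nat.card_eq_fintype_card]
    exact Fintype.card_congr (Equiv.subtypeUnivEquiv fun x => ⟨x, rfl⟩)
  have h2 : subRank K M (fun x => Sum.inl x ∉ Set.range (Sum.inl : X → X ⊕ Y))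
      (fun y => Sum.inr y ∈ Set.range (Sum.inl : X → X ⊕ Y)) = 0 :=
    subRank_eq_zero_cols _ _ _ fun y hy => by rcases hy with ⟨x, hx⟩; exact absurd hx Sum.inl_ne_inr
  omega

end csrgenN

lemma csr_transpose_transfer {X Y : Type*} [Fintype X] [DecidableEq X] [Fintype Y] [DecidableEq Y]
    {K K' : Type*} [Field K] [Field K'] (M : Matrix X Y K) (M' : Matrix X Y K')
    (h : ∀ S : Set (X ⊕ Y), colSpanRank K (genN M) S = colSpanRank K' (genN M') S)
    (T : Set (Y ⊕ X)) :
    colSpanRank K (genN Mᵀ) T = colSpanRank K' (genN M'ᵀ) T := by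
  rw [csr_genN, csr_genN]
  congr 1
  -- reduce to equality of subRanks of the transposes
  rw [← subRank_transpose, ← subRank_transpose]
  -- relate to a suitable set S₀ for the original matrices
  set S₀ : Set (X ⊕ Y) :=
    Sum.inl '' {x : X | Sum.inr x ∉ T} ∪ Sum.inr '' {y : Y | Sum.inl y ∉ T} with hS₀
  have hiff1 : ∀ x : X, (Sum.inl x ∉ S₀) ↔ (Sum.inr x ∈ T) := by
    intro x
    constructor
    · intro hx
      by_contra hc
      exact hx (Or.inl ⟨x, hc, rfl⟩)
    · intro hx hc
      rcases hc with ⟨x', hx', he⟩ | ⟨y', _, he⟩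
      · cases Sum.inl.injEq .. ▸ he
        exact hx' (by rwa [← Sum.inl.inj he])
      · exact absurd he Sum.inr_ne_inl
  have hiff2 : ∀ y : Y, (Sum.inr y ∈ S₀) ↔ (Sum.inl y ∉ T) := by
    intro y
    constructor
    · rintro (⟨x', _, he⟩ | ⟨y', hy', he⟩)
      · exact absurd he Sum.inl_ne_inr
      · rwa [← Sum.inr.inj he]
    · intro hy
      exact Or.inr ⟨y, hy, rfl⟩
  have hK := csr_genN M S₀
  have hK' := csr_genN M' S₀
  have hh := h S₀
  rw [hK, hK'] at hh
  have hcancel : subRank K M (fun x => Sum.inl x ∉ S₀) (fun y => Sum.inr y ∈ S₀)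
      = subRank K' M' (fun x => Sum.inl x ∉ S₀) (fun y => Sum.inr y ∈ S₀) := by
    omega
  calc subRank K M (fun x => Sum.inr x ∈ T) (fun y => Sum.inl y ∉ T)
      = subRank K M (fun x => Sum.inl x ∉ S₀) (fun y => Sum.inr y ∈ S₀) :=
        subRank_congr M (fun x => (hiff1 x).symm) (fun y => (hiff2 y).symm)
    _ = subRank K' M' (fun x => Sum.inl x ∉ S₀) (fun y => Sum.inr y ∈ S₀) := hcancel
    _ = subRank K' M' (fun x => Sum.inr x ∈ T) (fun y => Sum.inl y ∉ T) :=
        subRank_congr M' hiff1 hiff2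

def genBip {X Y R : Type*} [Zero R] (M : Matrix X Y R) :
    Matrix (X ⊕ Y) (X ⊕ Y) R :=
  Matrix.of fun a b =>
    match a, b with
    | Sum.inl x, Sum.inr y => M x y
    | Sum.inr y, Sum.inl x => M x y
    | _, _ => 0

def genIA {X Y R : Type*} [Zero R] [One R] [DecidableEq X] [DecidableEq Y]
    (M : Matrix X Y R) : Matrix (X ⊕ Y) ((X ⊕ Y) × Fin 2) R :=
  Matrix.of fun v p => if p.2 = 0 then (if v = p.1 then 1 else 0) else genBip M v p.1

def gphi {X Y : Type*} : X ⊕ Y → (X ⊕ Y) × Fin 2 := fun c =>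
  match c with
  | Sum.inl x => (Sum.inl x, 0)
  | Sum.inr y => (Sum.inr y, 1)

def gchi {X Y : Type*} : Y ⊕ X → (X ⊕ Y) × Fin 2 := fun c =>
  match c with
  | Sum.inl y => (Sum.inr y, 0)
  | Sum.inr x => (Sum.inl x, 1)

def extL (K X Y : Type*) [Field K] : (X → K) →ₗ[K] (X ⊕ Y → K) where
  toFun f := Sum.elim f 0
  map_add' f g := by funext c; cases c <;> simp
  map_smul' a f := by funext c; cases c <;> simp

def extR (K X Y : Type*) [Field K] : (Y → K) →ₗ[K] (X ⊕ Y → K) where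
  toFun f := Sum.elim 0 f
  map_add' f g := by funext c; cases c <;> simp
  map_smul' a f := by funext c; cases c <;> simp

lemma extL_injective {K X Y : Type*} [Field K] : Function.Injective (extL K X Y) :=
  fun f g h => funext fun x => congrFun h (Sum.inl x)

lemma extR_injective {K X Y : Type*} [Field K] : Function.Injective (extR K X Y) :=
  fun f g h => funext fun y => congrFun h (Sum.inr y)

lemma csr_genIA {X Y K : Type*} [Fintype X] [DecidableEq X] [Fintype Y] [DecidableEq Y]
    [Field K] (M : Matrix X Y K) (S : Set ((X ⊕ Y) × Fin 2)) :
    colSpanRank K (genIA M) S =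
      colSpanRank K (genN M) (gphi ⁻¹' S) + colSpanRank K (genN Mᵀ) (gchi ⁻¹' S) := by
  classical
  set cols : ((X ⊕ Y) × Fin 2) → (X ⊕ Y → K) := fun c i => genIA M i c with hcols
  have hdecomp : S = gphi '' (gphi ⁻¹' S) ∪ gchi '' (gchi ⁻¹' S) := by
    apply Set.Subset.antisymm
    · rintro ⟨v, i⟩ hp
      rcases v with x | y <;> fin_cases i
      · exact Or.inl ⟨Sum.inl x, hp, rfl⟩
      · exact Or.inr ⟨Sum.inr x, hp, rfl⟩
      · exact Or.inr ⟨Sum.inl y, hp, rfl⟩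
      · exact Or.inl ⟨Sum.inr y, hp, rfl⟩
    · rintro p (⟨c, hc, rfl⟩ | ⟨c, hc, rfl⟩) <;> exact hc
  have hrel1 : ∀ c : X ⊕ Y, cols (gphi c) = extL K X Y (fun i => genN M i c) := by
    intro c
    funext i
    rcases c with x | y <;> rcases i with x' | y' <;>
      simp [hcols, genIA, genN, genBip, gphi, extL, Sum.inl.injEq, Sum.inr.injEq, eq_comm]
  have hrel2 : ∀ c : Y ⊕ X, cols (gchi c) = extR K X Y (fun i => genN Mᵀ i c) := by
    intro c
    funext i
    rcases c with y | x <;> rcases i with x' | y' <;>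
      simp [hcols, genIA, genN, genBip, gchi, extR, Sum.inl.injEq, Sum.inr.injEq, eq_comm,
        Matrix.transpose_apply]
  -- span decomposition
  have hspan : Submodule.span K (cols '' S) =
      Submodule.span K (cols '' (gphi '' (gphi ⁻¹' S)))
        ⊔ Submodule.span K (cols '' (gchi '' (gchi ⁻¹' S))) := by
    conv_lhs => rw [hdecomp]
    rw [Set.image_union, Submodule.span_union]
  have hle1 : Submodule.span K (cols '' (gphi '' (gphi ⁻¹' S))) ≤ LinearMap.range (extL K X Y) := by
    rw [Submodule.span_le]
    rintro _ ⟨_, ⟨c, _, rfl⟩, rfl⟩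
    exact ⟨_, (hrel1 c).symm⟩
  have hle2 : Submodule.span K (cols '' (gchi '' (gchi ⁻¹' S))) ≤ LinearMap.range (extR K X Y) := by
    rw [Submodule.span_le]
    rintro _ ⟨_, ⟨c, _, rfl⟩, rfl⟩
    exact ⟨_, (hrel2 c).symm⟩
  have hdisj : LinearMap.range (extL K X Y) ⊓ LinearMap.range (extR K X Y) = ⊥ := by
    rw [eq_bot_iff]
    rintro f ⟨⟨a, ha⟩, ⟨b, hb⟩⟩
    have : f = 0 := by
      funext c
      rcases c with x | y
      · rw [← hb]; rfl
      · rw [← ha]; rfl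
    simp [this]
  have hinf : Submodule.span K (cols '' (gphi '' (gphi ⁻¹' S)))
      ⊓ Submodule.span K (cols '' (gchi '' (gchi ⁻¹' S))) = ⊥ := by
    rw [eq_bot_iff, ← hdisj]
    exact inf_le_inf hle1 hle2
  have hadd := Submodule.finrank_sup_add_finrank_inf_eq
    (Submodule.span K (cols '' (gphi '' (gphi ⁻¹' S))))
    (Submodule.span K (cols '' (gchi '' (gchi ⁻¹' S))))
  rw [hinf, finrank_bot, Nat.add_zero] at hadd
  have hpart1 : Module.finrank K ↥(Submodule.span K (cols '' (gphi '' (gphi ⁻¹' S))))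
      = colSpanRank K (genN M) (gphi ⁻¹' S) :=
    finrank_span_image_comp _ cols gphi (extL K X Y) extL_injective hrel1 _
  have hpart2 : Module.finrank K ↥(Submodule.span K (cols '' (gchi '' (gchi ⁻¹' S))))
      = colSpanRank K (genN Mᵀ) (gchi ⁻¹' S) :=
    finrank_span_image_comp _ cols gchi (extR K X Y) extR_injective hrel2 _
  have : colSpanRank K (genIA M) S = Module.finrank K ↥(Submodule.span K (cols '' S)) := rfl
  rw [this, hspan, hadd, hpart1, hpart2]

/-- If the binary matroid `N` (represented over GF(2) by `Nmat A`) is representable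
over every field, then `Z₂(G)` is strictly representable over every field, where `G`
is the bipartite graph with fundamental matrix `A`. -/
theorem Z2_bipartite_strictly_representable
    {X Y : Type} [Fintype X] [DecidableEq X] [Fintype Y] [DecidableEq Y]
    (A : Matrix X Y (ZMod 2))
    (hN : ∀ (F : Type) [Field F], ∃ (k : ℕ) (P : Matrix (Fin k) (X ⊕ Y) F),
      ∀ S : Set (X ⊕ Y), colSpanRank F P S = colSpanRank (ZMod 2) (Nmat A) S) :
    ∀ (F : Type) [Field F], Z2RepStrict F (bipAdj A) := by
  intro F _
  classical
  obtain ⟨k₀, Q, hQ⟩ := hN F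
  have hNA : Nmat A = genN A := rfl
  have hQ' : ∀ S : Set (X ⊕ Y), colSpanRank F Q S = colSpanRank (ZMod 2) (genN A) S := by
    intro S
    rw [hQ S, hNA]
  -- step 1: standardize the representation of N over F
  let Qc : (X ⊕ Y) → (Fin k₀ → F) := fun c i => Q i c
  let Qi : Matrix (Fin k₀) X F := Matrix.of fun i x => Q i (Sum.inl x)
  let L : (X → F) →ₗ[F] (Fin k₀ → F) := Qi.mulVecLin
  have hcsr_inl : colSpanRank F Q (Set.range Sum.inl) = Fintype.card X := by
    rw [hQ' _]
    exact csr_genN_inl A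
  have hcsr_univ : colSpanRank F Q Set.univ = Fintype.card X := by
    rw [hQ' _]
    exact csr_genN_univ A
  have hrangeL : LinearMap.range L = Submodule.span F (Qc '' Set.range Sum.inl) := by
    rw [Matrix.range_mulVecLin]
    congr 1
    rw [← Set.range_comp]
    rfl
  have hfr1 : Module.finrank F ↥(LinearMap.range L) = Fintype.card X := by
    rw [hrangeL]
    exact hcsr_inl
  have hinjL : Function.Injective L := by
    have h := LinearMap.finrank_range_add_finrank_ker L
    rw [hfr1, Module.finrank_pi] at h
    have h0 : Module.finrank F ↥(LinearMap.ker L) = 0 := by omega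
    exact LinearMap.ker_eq_bot.mp (Submodule.finrank_eq_zero.mp h0)
  have hle : LinearMap.range L ≤ Submodule.span F (Qc '' Set.univ) := by
    rw [hrangeL]
    exact Submodule.span_mono (Set.image_mono (Set.subset_univ _))
  have heq : LinearMap.range L = Submodule.span F (Qc '' Set.univ) := by
    apply Submodule.eq_of_le_of_finrank_le hle
    rw [hfr1]
    exact le_of_eq hcsr_univ
  have hmem : ∀ y : Y, ∃ v : X → F, L v = Qc (Sum.inr y) := by
    intro y
    have : Qc (Sum.inr y) ∈ LinearMap.range L := by
      rw [heq]
      exact Submodule.subset_span ⟨Sum.inr y, trivial, rfl⟩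
    exact this
  choose b hb using hmem
  let B : Matrix X Y F := Matrix.of fun x y => b y x
  have hrel : ∀ c : X ⊕ Y, (fun i => Q i c) = L (fun x => genN B x c) := by
    intro c
    rcases c with x | y
    · funext i
      show Q i (Sum.inl x) = Qi.mulVec (fun x' => genN B x' (Sum.inl x)) i
      have h1 : (fun x' => genN B x' (Sum.inl x)) = fun x' => if x' = x then (1:F) else 0 := rfl
      rw [h1]
      simp [Matrix.mulVec, dotProduct, mul_ite, mul_one, mul_zero, Qi]
    · have h1 : (fun x => genN B x (Sum.inr y)) = b y := rfl
      show (fun i => Q i (Sum.inr y)) = L (fun x => genN B x (Sum.inr y))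
      rw [h1, hb y]
  have hBS : ∀ S : Set (X ⊕ Y), colSpanRank F (genN B) S = colSpanRank (ZMod 2) (genN A) S := by
    intro S
    rw [← hQ' S]
    exact (colSpanRank_eq_of_comp (genN B) Q L hinjL hrel S).symm
  have hBT : ∀ T : Set (Y ⊕ X), colSpanRank F (genN Bᵀ) T = colSpanRank (ZMod 2) (genN Aᵀ) T :=
    csr_transpose_transfer B A hBS
  -- assemble the representation of Z₂
  let k : ℕ := Fintype.card (X ⊕ Y)
  let e : (X ⊕ Y) ≃ Fin k := Fintype.equivFin _
  let P : Matrix (Fin k) ((X ⊕ Y) × Fin 2) F := (genIA B).submatrix e.symm id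
  have hPcsr : ∀ S : Set ((X ⊕ Y) × Fin 2),
      colSpanRank F P S = colSpanRank F (genIA B) S := by
    intro S
    refine colSpanRank_eq_of_comp (genIA B) P
      (LinearEquiv.funCongrLeft F F e.symm).toLinearMap
      (LinearEquiv.funCongrLeft F F e.symm).injective (fun j => ?_) S
    funext i
    simp [P, LinearEquiv.funCongrLeft_apply, LinearMap.funLeft_apply, Matrix.submatrix_apply]
  have hIA : IAmat (bipAdj A) = genIA A := rfl
  refine ⟨k, P, ?_, ?_⟩
  · rw [rank_eq_csr_univ, hPcsr Set.univ, ← rank_eq_csr_univ]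
    rw [rank_eq_csr_univ, csr_genIA, Set.preimage_univ, Set.preimage_univ,
      csr_genN_univ, csr_genN_univ, ← Fintype.card_sum]
  · intro S _
    rw [hPcsr S, hIA, csr_genIA, csr_genIA, hBS _, hBT _]
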